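/- Let ρ₁ and ρ₂ be invertible density matrices of dimension d and let p₁, p₂ ≥ 0. Define √(ρ₁ρ₂) := ρ₁^{1/2} (ρ₁^{1/2} ρ₂ ρ₁^{1/2})^{1/2} ρ₁^{−1/2} and √(ρ₂ρ₁) := ρ₂^{1/2} (ρ₂^{1/2} ρ₁ ρ₂^{1/2})^{1/2} ρ₂^{−1/2}. Then the 2d×2d block matrix X = [[p₁ρ₁, √(p₁p₂) √(ρ₁ρ₂)], [√(p₁p₂) √(ρ₂ρ₁), p₂ρ₂]] is positive semidefinite. -/

import Mathlib

open scoped Classical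

open Matrix ComplexOrder

/-- The positive semidefinite square root of a matrix: the unique PSD square root
when the matrix is PSD, and `0` otherwise. -/
noncomputable def msqrt {n : Type*} [Fintype n] [DecidableEq n]
    (A : Matrix n n ℂ) : Matrix n n ℂ :=
  if h : A.PosSemidef then
    (h.1.eigenvectorUnitary : Matrix n n ℂ) * diagonal ((↑) ∘ (Real.sqrt ∘ h.1.eigenvalues)) *
      (star h.1.eigenvectorUnitary : Matrix n n ℂ)
  else 0

/-- `√(ρ₁ρ₂) := ρ₁^{1/2} (ρ₁^{1/2} ρ₂ ρ₁^{1/2})^{1/2} ρ₁^{−1/2}`, the square root of the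
product of two (invertible) positive semidefinite matrices. -/
noncomputable def sqrtProd {n : Type*} [Fintype n] [DecidableEq n]
    (ρ₁ ρ₂ : Matrix n n ℂ) : Matrix n n ℂ :=
  msqrt ρ₁ * msqrt (msqrt ρ₁ * ρ₂ * msqrt ρ₁) * (msqrt ρ₁)⁻¹

noncomputable def Matrix.PosSemidef.sqrt {n : Type*} [Fintype n] [DecidableEq n]
    {A : Matrix n n ℂ} (h : A.PosSemidef) : Matrix n n ℂ :=
  (h.1.eigenvectorUnitary : Matrix n n ℂ) * diagonal ((↑) ∘ (Real.sqrt ∘ h.1.eigenvalues)) *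
      (star h.1.eigenvectorUnitary : Matrix n n ℂ)

open scoped MatrixOrder in
lemma Matrix.PosSemidef.sqrt_eq_cfc {n : Type*} [Fintype n] [DecidableEq n]
    {A : Matrix n n ℂ} (h : A.PosSemidef) : h.sqrt = CFC.sqrt A := by
  rw [CFC.sqrt_eq_cfc, cfc_nnreal_eq_real _ A, h.1.cfc_eq]
  simp only [IsHermitian.cfc, Matrix.PosSemidef.sqrt, Real.coe_sqrt, Real.coe_toNNReal']
  rw [Unitary.conjStarAlgAut_apply]
  congr 3
  funext i
  simp [max_eq_left (h.eigenvalues_nonneg i)]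

open scoped MatrixOrder in
lemma Matrix.PosSemidef.posSemidef_sqrt {n : Type*} [Fintype n] [DecidableEq n]
    {A : Matrix n n ℂ} (h : A.PosSemidef) : h.sqrt.PosSemidef := by
  rw [h.sqrt_eq_cfc]; exact nonneg_iff_posSemidef.mp (CFC.sqrt_nonneg A)

open scoped MatrixOrder in
lemma Matrix.PosSemidef.sqrt_mul_self {n : Type*} [Fintype n] [DecidableEq n]
    {A : Matrix n n ℂ} (h : A.PosSemidef) : h.sqrt * h.sqrt = A := by
  rw [h.sqrt_eq_cfc]; exact CFC.sqrt_mul_sqrt_self A (nonneg_iff_posSemidef.mpr h)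

open scoped MatrixOrder in
lemma Matrix.PosSemidef.eq_sqrt_of_sq_eq {n : Type*} [Fintype n] [DecidableEq n]
    {A : Matrix n n ℂ} (hA : A.PosSemidef) {B : Matrix n n ℂ} (hB : B.PosSemidef)
    (hAB : A ^ 2 = B) : A = hB.sqrt := by
  rw [hB.sqrt_eq_cfc]
  exact (CFC.sqrt_unique (by rw [← sq]; exact hAB) (nonneg_iff_posSemidef.mpr hA)).symm

lemma conj_sqrt_aux {n : Type*} [Fintype n] [DecidableEq n] (M : Matrix n n ℂ)
    (hM : IsUnit M.det) (h1 : (M * Mᴴ).PosSemidef) (h2 : (Mᴴ * M).PosSemidef) :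
    M⁻¹ * h1.sqrt * M = h2.sqrt := by
  set P := h1.sqrt with hPdef
  have hP : P.PosSemidef := h1.posSemidef_sqrt
  have hPP : P * P = M * Mᴴ := h1.sqrt_mul_self
  have hMH : IsUnit Mᴴ.det := by rw [det_conjTranspose]; exact hM.star
  have hPdet : IsUnit P.det := by
    have h : IsUnit (P.det * P.det) := by
      rw [← det_mul, hPP, det_mul]; exact hM.mul hMH
    exact isUnit_of_mul_isUnit_left h
  have hPinvH : (P⁻¹)ᴴ = P⁻¹ := by rw [conjTranspose_nonsing_inv, hP.1]
  have hPinv : P⁻¹.PosSemidef := by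
    have h := hP.conjTranspose_mul_mul_same P⁻¹
    rwa [hPinvH, nonsing_inv_mul P hPdet, one_mul] at h
  have key : Mᴴ * P⁻¹ = M⁻¹ * P := by
    calc Mᴴ * P⁻¹ = M⁻¹ * (M * Mᴴ) * P⁻¹ := by
          rw [← mul_assoc, nonsing_inv_mul M hM, one_mul]
      _ = M⁻¹ * (P * P) * P⁻¹ := by rw [hPP]
      _ = M⁻¹ * P := by rw [mul_assoc, mul_assoc, mul_nonsing_inv P hPdet, mul_one]
  have hPSD : (M⁻¹ * P * M).PosSemidef := by
    rw [← key]; exact hPinv.conjTranspose_mul_mul_same M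
  refine hPSD.eq_sqrt_of_sq_eq h2 ?_
  calc (M⁻¹ * P * M) ^ 2 = M⁻¹ * P * (M * M⁻¹) * P * M := by rw [pow_two]; noncomm_ring
    _ = M⁻¹ * (P * P) * M := by
        rw [mul_nonsing_inv M hM, mul_one, mul_assoc M⁻¹ P P]
    _ = Mᴴ * M := by rw [hPP, ← mul_assoc, nonsing_inv_mul M hM, one_mul]

/-- For invertible density matrices `ρ₁`, `ρ₂` and weights `p₁, p₂ ≥ 0`, the block matrix
`[[p₁ρ₁, √(p₁p₂)√(ρ₁ρ₂)], [√(p₁p₂)√(ρ₂ρ₁), p₂ρ₂]]` is positive semidefinite. -/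
theorem blockMatrix_sqrtProd_posSemidef {d : ℕ}
    {ρ₁ ρ₂ : Matrix (Fin d) (Fin d) ℂ}
    (h₁ : ρ₁.PosSemidef) (h₁t : ρ₁.trace = 1) (h₁inv : IsUnit ρ₁.det)
    (h₂ : ρ₂.PosSemidef) (h₂t : ρ₂.trace = 1) (h₂inv : IsUnit ρ₂.det)
    {p₁ p₂ : ℝ} (hp₁ : 0 ≤ p₁) (hp₂ : 0 ≤ p₂) :
    (Matrix.fromBlocks
        ((p₁ : ℂ) • ρ₁) ((Real.sqrt (p₁ * p₂) : ℂ) • sqrtProd ρ₁ ρ₂)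
        ((Real.sqrt (p₁ * p₂) : ℂ) • sqrtProd ρ₂ ρ₁) ((p₂ : ℂ) • ρ₂)).PosSemidef := by
  set A := h₁.sqrt with hAdef
  set B := h₂.sqrt with hBdef
  have hmA : msqrt ρ₁ = A := dif_pos h₁
  have hmB : msqrt ρ₂ = B := dif_pos h₂
  have hA : A.PosSemidef := h₁.posSemidef_sqrt
  have hB : B.PosSemidef := h₂.posSemidef_sqrt
  have hAH : Aᴴ = A := hA.1
  have hBH : Bᴴ = B := hB.1
  have hAA : A * A = ρ₁ := h₁.sqrt_mul_self
  have hBB : B * B = ρ₂ := h₂.sqrt_mul_self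
  have hAdet : IsUnit A.det := by
    refine isUnit_of_mul_isUnit_left (y := A.det) ?_
    rw [← det_mul, hAA]; exact h₁inv
  have hBdet : IsUnit B.det := by
    refine isUnit_of_mul_isUnit_left (y := B.det) ?_
    rw [← det_mul, hBB]; exact h₂inv
  have hAinvH : (A⁻¹)ᴴ = A⁻¹ := by rw [conjTranspose_nonsing_inv, hAH]
  set M := A * B with hMdef
  have hMdet : IsUnit M.det := by rw [hMdef, det_mul]; exact hAdet.mul hBdet
  have hMMH : M * Mᴴ = A * ρ₂ * A := by
    rw [hMdef, conjTranspose_mul, hAH, hBH, ← hBB]; noncomm_ring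
  have hMHM : Mᴴ * M = B * ρ₁ * B := by
    rw [hMdef, conjTranspose_mul, hAH, hBH, ← hAA]; noncomm_ring
  have h1 : (M * Mᴴ).PosSemidef := posSemidef_self_mul_conjTranspose M
  have h2 : (Mᴴ * M).PosSemidef := posSemidef_conjTranspose_mul_self M
  set S := msqrt (A * ρ₂ * A) with hSdef
  set T := msqrt (B * ρ₁ * B) with hTdef
  have hS1 : (A * ρ₂ * A).PosSemidef := by rw [← hMMH]; exact h1
  have hT1 : (B * ρ₁ * B).PosSemidef := by rw [← hMHM]; exact h2
  have hSeq : S = hS1.sqrt := dif_pos hS1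
  have hTeq : T = hT1.sqrt := dif_pos hT1
  have hS : S.PosSemidef := hSeq ▸ hS1.posSemidef_sqrt
  have hSH : Sᴴ = S := hS.1
  have hSS : S * S = A * ρ₂ * A := hSeq ▸ hS1.sqrt_mul_self
  have haux : M⁻¹ * S * M = T := by
    have e1 : msqrt (M * Mᴴ) = S := by rw [hMMH]
    have e2 : msqrt (Mᴴ * M) = T := by rw [hMHM]
    rw [← e1, ← e2, msqrt, dif_pos h1, msqrt, dif_pos h2]
    exact conj_sqrt_aux M hMdet h1 h2
  have hconj : A⁻¹ * S * A = B * T * B⁻¹ := by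
    rw [← haux, hMdef, Matrix.mul_inv_rev]
    simp only [mul_assoc]
    rw [mul_nonsing_inv B hBdet, mul_one, ← mul_assoc B B⁻¹,
      mul_nonsing_inv B hBdet, one_mul]
  have hsp1 : sqrtProd ρ₁ ρ₂ = A * S * A⁻¹ := by rw [sqrtProd, hmA]
  have hsp2 : sqrtProd ρ₂ ρ₁ = B * T * B⁻¹ := by rw [sqrtProd, hmB]
  set a : ℂ := (Real.sqrt p₁ : ℂ) with hadef
  set b : ℂ := (Real.sqrt p₂ : ℂ) with hbdef
  set N : Matrix (Fin d ⊕ Fin d) (Fin d ⊕ Fin d) ℂ :=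
    fromBlocks (a • A) (b • (S * A⁻¹)) 0 0 with hNdef
  have hab : a * b = (Real.sqrt (p₁ * p₂) : ℂ) := by
    rw [hadef, hbdef, ← Complex.ofReal_mul, Real.sqrt_mul hp₁]
  have haa : a * a = (p₁ : ℂ) := by
    rw [hadef, ← Complex.ofReal_mul, Real.mul_self_sqrt hp₁]
  have hbb : b * b = (p₂ : ℂ) := by
    rw [hbdef, ← Complex.ofReal_mul, Real.mul_self_sqrt hp₂]
  have hstar_a : star a = a := by rw [hadef]; exact Complex.conj_ofReal _
  have hstar_b : star b = b := by rw [hbdef]; exact Complex.conj_ofReal _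
  have hmain : Matrix.fromBlocks
        ((p₁ : ℂ) • ρ₁) ((Real.sqrt (p₁ * p₂) : ℂ) • sqrtProd ρ₁ ρ₂)
        ((Real.sqrt (p₁ * p₂) : ℂ) • sqrtProd ρ₂ ρ₁) ((p₂ : ℂ) • ρ₂) = Nᴴ * N := by
    rw [hNdef, fromBlocks_conjTranspose, fromBlocks_multiply]
    simp only [conjTranspose_zero, Matrix.zero_mul, Matrix.mul_zero, add_zero, zero_add,
      conjTranspose_smul, hstar_a, hstar_b, hAH, Matrix.smul_mul, Matrix.mul_smul,
      smul_smul, conjTranspose_mul, hAinvH, hSH]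
    have e12 : (Real.sqrt (p₁ * p₂) : ℂ) • sqrtProd ρ₁ ρ₂ = (b * a) • (A * (S * A⁻¹)) := by
      rw [mul_comm b a, hab, hsp1, mul_assoc]
    have e21 : (Real.sqrt (p₁ * p₂) : ℂ) • sqrtProd ρ₂ ρ₁ = (a * b) • (A⁻¹ * S * A) := by
      rw [hab, hsp2, ← hconj]
    have e22 : (p₂ : ℂ) • ρ₂ = (b * b) • (A⁻¹ * S * (S * A⁻¹)) := by
      have h : A⁻¹ * S * (S * A⁻¹) = ρ₂ := by
        rw [mul_assoc, ← mul_assoc S S, hSS]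
        simp only [mul_assoc]
        rw [mul_nonsing_inv A hAdet, mul_one, ← mul_assoc A⁻¹ A,
          nonsing_inv_mul A hAdet, one_mul]
      rw [hbb, h]
    rw [e12, e21, e22, haa, hAA]
  rw [hmain]
  exact posSemidef_conjTranspose_mul_self N
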